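/- For the Euler case θ¹ = 1, θ² = 0 of the beta-logistic family (so u = v = 1/2), the α-scalar curvature R^{(α)} = (1−α²)·[ψ'(θ¹)ψ''(u)ψ''(v) − ψ''(θ¹)(ψ'(u)ψ''(v) + ψ'(v)ψ''(u))]/(2𝒢²), where 𝒢 = ψ'(u)ψ'(v) − ψ'(θ¹)(ψ'(u)+ψ'(v)), equals 336·(1−α²)·ζ(3)² / π⁶ for every real α. -/

import Mathlib

/-- The trigamma function `ψ'(z) = d²/dz² log Γ(z)`. -/
noncomputable def trigamma (z : ℝ) : ℝ := iteratedDeriv 2 (fun x => Real.log (Real.Gamma x)) z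

/-- The tetragamma function `ψ''(z) = d³/dz³ log Γ(z)`. -/
noncomputable def tetragamma (z : ℝ) : ℝ := iteratedDeriv 3 (fun x => Real.log (Real.Gamma x)) z

open Real Filter Topology Set

namespace EulerAux

noncomputable def f (m : ℕ) (x : ℝ) : ℝ :=
  x * (Real.log ((m : ℝ) + 2) - Real.log ((m : ℝ) + 1))
    - Real.log (x + ((m : ℝ) + 1)) + Real.log ((m : ℝ) + 1)

noncomputable def g1 (m : ℕ) (x : ℝ) : ℝ :=
  (Real.log ((m : ℝ) + 2) - Real.log ((m : ℝ) + 1)) - (x + ((m : ℝ) + 1))⁻¹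

noncomputable def g2 (m : ℕ) (x : ℝ) : ℝ := ((x + ((m : ℝ) + 1)) ^ 2)⁻¹

noncomputable def g3 (m : ℕ) (x : ℝ) : ℝ := -2 * ((x + ((m : ℝ) + 1)) ^ 3)⁻¹

noncomputable def u (m : ℕ) : ℝ := 3 / ((m : ℝ) + 1) ^ 2

lemma hu : Summable u := by
  have h : Summable (fun n : ℕ => 1 / (n : ℝ) ^ 2) :=
    Real.summable_one_div_nat_pow.mpr (by norm_num)
  have h2 : Summable (fun n : ℕ => 1 / ((n : ℝ) + 1) ^ 2) := by
    have := (summable_nat_add_iff 1).mpr h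
    refine this.congr fun n => ?_
    push_cast
    ring_nf
  refine (h2.mul_left 3).congr fun n => ?_
  simp only [u, mul_one_div]

lemma pos_aux {m : ℕ} {x : ℝ} (hx : x ∈ Ioo (0:ℝ) 2) : (0:ℝ) < x + ((m : ℝ) + 1) := by
  have hm : (0:ℝ) ≤ (m : ℝ) := Nat.cast_nonneg m
  have := hx.1
  linarith

lemma hderiv_f {m : ℕ} {x : ℝ} (hx : x ∈ Ioo (0:ℝ) 2) : HasDerivAt (f m) (g1 m x) x := by
  have h0 : (0:ℝ) < x + ((m : ℝ) + 1) := pos_aux hx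
  have h1 : HasDerivAt (fun y : ℝ => y * (Real.log ((m : ℝ) + 2) - Real.log ((m : ℝ) + 1)))
      (Real.log ((m : ℝ) + 2) - Real.log ((m : ℝ) + 1)) x :=
    hasDerivAt_mul_const _
  have h2 : HasDerivAt (fun y : ℝ => y + ((m : ℝ) + 1)) 1 x := (hasDerivAt_id x).add_const _
  have h3 := h2.log h0.ne'
  have := (h1.sub h3).add_const (Real.log ((m : ℝ) + 1))
  refine this.congr_deriv ?_
  simp [g1, one_div]

lemma hderiv_g1 {m : ℕ} {x : ℝ} (hx : x ∈ Ioo (0:ℝ) 2) : HasDerivAt (g1 m) (g2 m x) x := by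
  have h0 : (0:ℝ) < x + ((m : ℝ) + 1) := pos_aux hx
  have h2 : HasDerivAt (fun y : ℝ => y + ((m : ℝ) + 1)) 1 x := (hasDerivAt_id x).add_const _
  have h3 := h2.inv h0.ne'
  have := (hasDerivAt_const x (Real.log ((m : ℝ) + 2) - Real.log ((m : ℝ) + 1))).sub h3
  refine this.congr_deriv ?_
  simp [g2, zero_sub, neg_neg, neg_div, one_div]

lemma hderiv_g2 {m : ℕ} {x : ℝ} (hx : x ∈ Ioo (0:ℝ) 2) : HasDerivAt (g2 m) (g3 m x) x := by
  have h0 : (0:ℝ) < x + ((m : ℝ) + 1) := pos_aux hx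
  have h2 : HasDerivAt (fun y : ℝ => (y + ((m : ℝ) + 1)) ^ 2) (2 * (x + ((m : ℝ) + 1))) x := by
    simpa using ((hasDerivAt_id x).add_const ((m : ℝ) + 1)).fun_pow 2
  have h3 := h2.inv (pow_ne_zero 2 h0.ne')
  refine h3.congr_deriv ?_
  have hne : x + ((m : ℝ) + 1) ≠ 0 := h0.ne'
  rw [g3]
  field_simp

lemma abs_bound {c x : ℝ} (hc : 1 ≤ c) (hx : x ∈ Ioo (0:ℝ) 2) :
    |Real.log (c + 1) - Real.log c - (x + c)⁻¹| ≤ 3 / c ^ 2 := by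
  have hc0 : (0:ℝ) < c := by linarith
  have hxc : (0:ℝ) < x + c := by have := hx.1; linarith
  set L := Real.log (c + 1) - Real.log c with hL
  have hL1 : L ≤ 1 / c := by
    have h := Real.log_le_sub_one_of_pos (x := (c + 1) / c) (by positivity)
    rw [Real.log_div (by positivity) hc0.ne'] at h
    have : (c + 1) / c - 1 = 1 / c := by field_simp; ring
    linarith [h, this.le, this.ge]
  have hL2 : 1 / (c + 1) ≤ L := by
    have h := Real.log_le_sub_one_of_pos (x := c / (c + 1)) (by positivity)
    rw [Real.log_div hc0.ne' (by positivity)] at h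
    have : c / (c + 1) - 1 = -(1 / (c + 1)) := by field_simp; ring
    linarith [h, this.le]
  have hi1 : (x + c)⁻¹ ≤ 1 / c := by
    rw [← one_div]
    exact one_div_le_one_div_of_le hc0 (by linarith [hx.1])
  have hi2 : 1 / (c + 2) ≤ (x + c)⁻¹ := by
    rw [← one_div]
    exact one_div_le_one_div_of_le hxc (by linarith [hx.2])
  have gap1 : 1 / c - 1 / (c + 2) ≤ 2 / c ^ 2 := by
    have e : 1 / c - 1 / (c + 2) = 2 / (c * (c + 2)) := by field_simp; ring
    rw [e]
    rw [div_le_div_iff₀ (by positivity) (by positivity)]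
    nlinarith
  have gap2 : 1 / c - 1 / (c + 1) ≤ 1 / c ^ 2 := by
    have e : 1 / c - 1 / (c + 1) = 1 / (c * (c + 1)) := by field_simp; ring
    rw [e]
    rw [div_le_div_iff₀ (by positivity) (by positivity)]
    nlinarith
  have h3 : (0:ℝ) < 3 / c ^ 2 := by positivity
  have h1c : (0:ℝ) < 1 / c ^ 2 := by positivity
  have h31 : 1 / c ^ 2 ≤ 3 / c ^ 2 := by
    rw [div_le_div_iff₀ (by positivity) (by positivity)]; nlinarith
  have h23 : 2 / c ^ 2 ≤ 3 / c ^ 2 := by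
    rw [div_le_div_iff₀ (by positivity) (by positivity)]; nlinarith
  rw [abs_le]
  constructor <;> linarith

lemma bound_g1 {m : ℕ} {x : ℝ} (hx : x ∈ Ioo (0:ℝ) 2) : ‖g1 m x‖ ≤ u m := by
  have hc : (1:ℝ) ≤ (m : ℝ) + 1 := by have := Nat.cast_nonneg (α := ℝ) m; linarith
  have := abs_bound hc hx
  rw [show ((m:ℝ) + 1) + 1 = (m:ℝ) + 2 by ring] at this
  simpa [g1, u, Real.norm_eq_abs] using this

lemma bound_g2 {m : ℕ} {x : ℝ} (hx : x ∈ Ioo (0:ℝ) 2) : ‖g2 m x‖ ≤ u m := by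
  have hc : (1:ℝ) ≤ (m : ℝ) + 1 := by have := Nat.cast_nonneg (α := ℝ) m; linarith
  have h0 := pos_aux (m := m) hx
  have hp : (0:ℝ) < (x + ((m:ℝ) + 1)) ^ 2 := pow_pos h0 2
  rw [g2, u, Real.norm_eq_abs, abs_of_pos (inv_pos.mpr hp), inv_eq_one_div]
  have hle : ((m:ℝ) + 1) ^ 2 ≤ (x + ((m:ℝ) + 1)) ^ 2 :=
    pow_le_pow_left₀ (by positivity) (by linarith [hx.1]) 2
  have h1 : 1 / (x + ((m:ℝ)+1)) ^ 2 ≤ 1 / ((m:ℝ)+1) ^ 2 :=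
    one_div_le_one_div_of_le (by positivity) hle
  have h2 : 1 / ((m:ℝ)+1) ^ 2 ≤ 3 / ((m:ℝ)+1) ^ 2 := by
    rw [div_le_div_iff₀ (by positivity) (by positivity)]; nlinarith
  linarith

lemma bound_g3 {m : ℕ} {x : ℝ} (hx : x ∈ Ioo (0:ℝ) 2) : ‖g3 m x‖ ≤ u m := by
  have hc : (1:ℝ) ≤ (m : ℝ) + 1 := by have := Nat.cast_nonneg (α := ℝ) m; linarith
  have h0 := pos_aux (m := m) hx
  have hp : (0:ℝ) < (x + ((m:ℝ) + 1)) ^ 3 := pow_pos h0 3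
  rw [g3, u, Real.norm_eq_abs, abs_mul, abs_of_pos (inv_pos.mpr hp),
    show |(-2 : ℝ)| = 2 by norm_num]
  have hle : ((m:ℝ) + 1) ^ 3 ≤ (x + ((m:ℝ) + 1)) ^ 3 :=
    pow_le_pow_left₀ (by positivity) (by linarith [hx.1]) 3
  have h23 : ((m:ℝ) + 1) ^ 2 ≤ ((m:ℝ) + 1) ^ 3 :=
    pow_le_pow_right₀ (by linarith) (by norm_num)
  have h1 : ((x + ((m:ℝ)+1)) ^ 3)⁻¹ ≤ (((m:ℝ)+1) ^ 2)⁻¹ := by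
    apply inv_anti₀ (by positivity) (by linarith)
  have h2 : (0:ℝ) < (((m:ℝ)+1) ^ 2)⁻¹ := by positivity
  rw [div_eq_mul_inv]
  nlinarith

lemma one_mem : (1:ℝ) ∈ Ioo (0:ℝ) 2 := by norm_num

lemma half_mem : (1/2:ℝ) ∈ Ioo (0:ℝ) 2 := by norm_num

lemma f_one (m : ℕ) : f m 1 = 0 := by
  rw [f, show (1:ℝ) + ((m:ℝ) + 1) = (m:ℝ) + 2 by ring]
  ring

lemma summable_f {x : ℝ} (hx : x ∈ Ioo (0:ℝ) 2) : Summable fun m => f m x :=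
  summable_of_summable_hasDerivAt_of_isPreconnected hu isOpen_Ioo
    (convex_Ioo _ _).isPreconnected
    (fun _ _ hy => hderiv_f hy) (fun _ _ hy => bound_g1 hy) one_mem
    (by simp only [f_one]; exact summable_zero) hx

lemma partial_sum_eq (x : ℝ) (n : ℕ) :
    ∑ m ∈ Finset.range n, f m x
      = Real.BohrMollerup.logGammaSeq x n + Real.log x
        + x * (Real.log ((n:ℝ) + 1) - Real.log (n:ℝ)) := by
  have htel : ∑ m ∈ Finset.range n, (Real.log ((m:ℝ) + 2) - Real.log ((m:ℝ) + 1))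
      = Real.log ((n:ℝ) + 1) := by
    have := Finset.sum_range_sub (f := fun k : ℕ => Real.log ((k:ℝ) + 1)) n
    simp only [Nat.cast_zero, zero_add, Real.log_one, sub_zero] at this
    rw [← this]
    apply Finset.sum_congr rfl
    intro i _
    push_cast
    ring_nf
  have hfact : Real.log (Nat.factorial n : ℝ) = ∑ m ∈ Finset.range n, Real.log ((m:ℝ) + 1) := by
    rw [← Finset.prod_range_add_one_eq_factorial, Nat.cast_prod,
      Real.log_prod (fun i _ => by positivity)]
    apply Finset.sum_congr rfl
    intro i _
    push_cast
    ring_nf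
  have hsplit : ∑ m ∈ Finset.range (n+1), Real.log (x + (m:ℕ))
      = (∑ m ∈ Finset.range n, Real.log (x + ((m:ℝ) + 1))) + Real.log x := by
    rw [Finset.sum_range_succ']
    congr 1
    · exact Finset.sum_congr rfl fun i _ => by push_cast; ring_nf
    · norm_num
  rw [Real.BohrMollerup.logGammaSeq, hsplit, hfact]
  simp only [f]
  rw [Finset.sum_add_distrib, Finset.sum_sub_distrib, ← Finset.mul_sum, htel]
  ring

lemma tsum_f_eq {x : ℝ} (hx : x ∈ Ioo (0:ℝ) 2) :
    ∑' m, f m x = Real.log (Real.Gamma x) + Real.log x := by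
  have hs := summable_f hx
  have h1 : Tendsto (fun n => ∑ m ∈ Finset.range n, f m x) atTop (𝓝 (∑' m, f m x)) :=
    hs.hasSum.tendsto_sum_nat
  have hlog0 : Tendsto (fun n : ℕ => Real.log ((n:ℝ) + 1) - Real.log (n:ℝ)) atTop (𝓝 0) := by
    apply tendsto_of_tendsto_of_tendsto_of_le_of_le' tendsto_const_nhds
      tendsto_one_div_atTop_nhds_zero_nat
    · filter_upwards [eventually_ge_atTop 1] with n hn
      have hn' : (1:ℝ) ≤ (n:ℝ) := by exact_mod_cast hn
      have := Real.log_le_log (by linarith) (show (n:ℝ) ≤ (n:ℝ) + 1 by linarith)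
      linarith
    · filter_upwards [eventually_ge_atTop 1] with n hn
      have hn' : (1:ℝ) ≤ (n:ℝ) := by exact_mod_cast hn
      have h := Real.log_le_sub_one_of_pos (x := ((n:ℝ) + 1) / (n:ℝ)) (by positivity)
      rw [Real.log_div (by positivity) (by positivity)] at h
      have e : ((n:ℝ) + 1) / (n:ℝ) - 1 = 1 / (n:ℝ) := by field_simp; ring
      linarith [h, e.le]
  have h2 : Tendsto (fun n => ∑ m ∈ Finset.range n, f m x) atTop
      (𝓝 (Real.log (Real.Gamma x) + Real.log x)) := by
    have hg := Real.BohrMollerup.tendsto_log_gamma hx.1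
    have := (hg.add_const (Real.log x)).add (hlog0.const_mul x)
    simp only [mul_zero, add_zero] at this
    refine this.congr fun n => ?_
    rw [partial_sum_eq]
  exact tendsto_nhds_unique h1 h2

lemma summable_g1 : Summable fun m => g1 m 1 :=
  Summable.of_norm_bounded hu fun m => bound_g1 one_mem

lemma summable_g2 : Summable fun m => g2 m 1 :=
  Summable.of_norm_bounded hu fun m => bound_g2 one_mem

noncomputable def G1 (x : ℝ) : ℝ := ∑' m, g1 m x
noncomputable def G2 (x : ℝ) : ℝ := ∑' m, g2 m x
noncomputable def G3 (x : ℝ) : ℝ := ∑' m, g3 m x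

lemma hF {y : ℝ} (hy : y ∈ Ioo (0:ℝ) 2) : HasDerivAt (fun x => ∑' m, f m x) (G1 y) y :=
  hasDerivAt_tsum_of_isPreconnected hu isOpen_Ioo (convex_Ioo _ _).isPreconnected
    (fun _ _ hz => hderiv_f hz) (fun _ _ hz => bound_g1 hz) one_mem
    (by simp only [f_one]; exact summable_zero) hy

lemma hG1 {y : ℝ} (hy : y ∈ Ioo (0:ℝ) 2) : HasDerivAt G1 (G2 y) y :=
  hasDerivAt_tsum_of_isPreconnected hu isOpen_Ioo (convex_Ioo _ _).isPreconnected
    (fun _ _ hz => hderiv_g1 hz) (fun _ _ hz => bound_g2 hz) one_mem summable_g1 hy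

lemma hG2 {y : ℝ} (hy : y ∈ Ioo (0:ℝ) 2) : HasDerivAt G2 (G3 y) y :=
  hasDerivAt_tsum_of_isPreconnected hu isOpen_Ioo (convex_Ioo _ _).isPreconnected
    (fun _ _ hz => hderiv_g2 hz) (fun _ _ hz => bound_g3 hz) one_mem summable_g2 hy

lemma log_gamma_ev {p : ℝ} (hp : p ∈ Ioo (0:ℝ) 2) :
    (fun x => Real.log (Real.Gamma x)) =ᶠ[𝓝 p] fun x => (∑' m, f m x) - Real.log x := by
  filter_upwards [isOpen_Ioo.mem_nhds hp] with z hz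
  rw [tsum_f_eq hz]
  ring

lemma deriv1 {p : ℝ} (hp : p ∈ Ioo (0:ℝ) 2) :
    deriv (fun x => Real.log (Real.Gamma x)) p = G1 p - p⁻¹ := by
  rw [(log_gamma_ev hp).deriv_eq]
  exact ((hF hp).sub (Real.hasDerivAt_log hp.1.ne')).deriv

lemma deriv1_ev {p : ℝ} (hp : p ∈ Ioo (0:ℝ) 2) :
    deriv (fun x => Real.log (Real.Gamma x)) =ᶠ[𝓝 p] fun z => G1 z - z⁻¹ := by
  filter_upwards [isOpen_Ioo.mem_nhds hp] with z hz
  exact deriv1 hz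

lemma deriv2 {p : ℝ} (hp : p ∈ Ioo (0:ℝ) 2) :
    deriv (deriv (fun x => Real.log (Real.Gamma x))) p = G2 p + (p ^ 2)⁻¹ := by
  rw [(deriv1_ev hp).deriv_eq]
  have h := (hG1 hp).fun_sub (hasDerivAt_inv hp.1.ne')
  rw [h.deriv]
  ring

lemma deriv2_ev {p : ℝ} (hp : p ∈ Ioo (0:ℝ) 2) :
    deriv (deriv (fun x => Real.log (Real.Gamma x))) =ᶠ[𝓝 p] fun z => G2 z + (z ^ 2)⁻¹ := by
  filter_upwards [isOpen_Ioo.mem_nhds hp] with z hz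
  exact deriv2 hz

lemma deriv3 {p : ℝ} (hp : p ∈ Ioo (0:ℝ) 2) :
    deriv (deriv (deriv (fun x => Real.log (Real.Gamma x)))) p
      = G3 p - 2 * (p ^ 3)⁻¹ := by
  rw [(deriv2_ev hp).deriv_eq]
  have hne : p ≠ 0 := hp.1.ne'
  have hsq : HasDerivAt (fun z : ℝ => (z ^ 2)⁻¹) (-(2 * p ^ 1) / (p ^ 2) ^ 2) p :=
    (hasDerivAt_pow 2 p).inv (pow_ne_zero 2 hne)
  have h := (hG2 hp).fun_add hsq
  rw [h.deriv]
  have : -(2 * p ^ 1) / (p ^ 2) ^ 2 = -(2 * (p ^ 3)⁻¹) := by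
    field_simp
  rw [this]
  ring

lemma sum3 : Summable (fun n : ℕ => 1 / (n:ℝ) ^ 3) :=
  Real.summable_one_div_nat_pow.mpr (by norm_num)

lemma hs3 {z : ℝ} (hz : z = ∑' n : ℕ, 1 / ((n : ℝ) + 1) ^ 3) :
    HasSum (fun n : ℕ => 1 / (n:ℝ) ^ 3) z := by
  have h := sum3.hasSum
  have e : ∑' n : ℕ, 1 / (n:ℝ) ^ 3 = z := by
    rw [sum3.tsum_eq_zero_add, hz]
    norm_num
  rwa [e] at h

lemma odd_hasSum {f : ℕ → ℝ} {a e : ℝ} (hf : HasSum f a)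
    (he : HasSum (fun k => f (2 * k)) e) : HasSum (fun k => f (2 * k + 1)) (a - e) := by
  have hinj : Function.Injective (fun k : ℕ => 2 * k + 1) := fun a b h => by
    simp only at h; omega
  have ho : Summable fun k => f (2 * k + 1) := hf.summable.comp_injective hinj
  have h2 := he.even_add_odd ho.hasSum
  have h3 : a = e + ∑' k, f (2 * k + 1) := hf.unique h2
  have h4 : a - e = ∑' k, f (2 * k + 1) := by linarith
  rw [h4]
  exact ho.hasSum

lemma even_pow {p : ℕ} (hp : p ≠ 0) {a : ℝ} (h : HasSum (fun n : ℕ => 1 / (n:ℝ) ^ p) a) :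
    HasSum (fun k : ℕ => 1 / (((2 * k : ℕ)):ℝ) ^ p) (a / 2 ^ p) := by
  have e : (fun k : ℕ => 1 / (((2 * k : ℕ)):ℝ) ^ p) = fun k : ℕ => (1 / (k:ℝ) ^ p) / 2 ^ p := by
    funext k
    push_cast
    rcases eq_or_ne (k:ℝ) 0 with h0 | h0
    · simp [h0, zero_pow hp]
    · field_simp
      ring
  rw [e]
  exact h.div_const _

lemma odd2 : HasSum (fun k : ℕ => 1 / (((2 * k + 1 : ℕ)):ℝ) ^ 2) (π ^ 2 / 8) := by
  have h := hasSum_zeta_two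
  have he := even_pow (by norm_num) h
  have := odd_hasSum h he
  convert this using 1
  ring

lemma odd3 {z : ℝ} (hz : z = ∑' n : ℕ, 1 / ((n : ℝ) + 1) ^ 3) :
    HasSum (fun k : ℕ => 1 / (((2 * k + 1 : ℕ)):ℝ) ^ 3) (7 * z / 8) := by
  have h := hs3 hz
  have he := even_pow (by norm_num) h
  have := odd_hasSum h he
  convert this using 1
  ring

lemma trigamma_eq {p : ℝ} (hp : p ∈ Ioo (0:ℝ) 2) : trigamma p = G2 p + (p ^ 2)⁻¹ := by
  rw [trigamma, iteratedDeriv_succ, iteratedDeriv_one]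
  exact deriv2 hp

lemma tetragamma_eq {p : ℝ} (hp : p ∈ Ioo (0:ℝ) 2) :
    tetragamma p = G3 p - 2 * (p ^ 3)⁻¹ := by
  rw [tetragamma, iteratedDeriv_succ, iteratedDeriv_succ, iteratedDeriv_one]
  exact deriv3 hp

lemma trigamma_one : trigamma 1 = π ^ 2 / 6 := by
  have h : HasSum (fun n : ℕ => 1 / (((n + 2 : ℕ)):ℝ) ^ 2) (π ^ 2 / 6 - 1) := by
    apply (hasSum_nat_add_iff (f := fun k : ℕ => 1 / (k:ℝ) ^ 2) 2).mpr
    refine (congrArg (HasSum _) ?_).mp hasSum_zeta_two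
    norm_num [Finset.sum_range_succ]
  have e : (fun m : ℕ => g2 m 1) = fun n : ℕ => 1 / (((n + 2 : ℕ)):ℝ) ^ 2 := by
    funext m
    rw [g2, one_div]
    push_cast
    ring_nf
  rw [trigamma_eq one_mem, G2, e, h.tsum_eq]
  norm_num

lemma tetragamma_one {z : ℝ} (hz : z = ∑' n : ℕ, 1 / ((n : ℝ) + 1) ^ 3) :
    tetragamma 1 = -2 * z := by
  have h : HasSum (fun n : ℕ => 1 / (((n + 2 : ℕ)):ℝ) ^ 3) (z - 1) := by
    apply (hasSum_nat_add_iff (f := fun k : ℕ => 1 / (k:ℝ) ^ 3) 2).mpr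
    refine (congrArg (HasSum _) ?_).mp (hs3 hz)
    norm_num [Finset.sum_range_succ]
  have h2 := h.mul_left (-2)
  have e : (fun m : ℕ => g3 m 1) = fun n : ℕ => -2 * (1 / (((n + 2 : ℕ)):ℝ) ^ 3) := by
    funext m
    rw [g3, one_div]
    push_cast
    ring_nf
  rw [tetragamma_eq one_mem, G3, e, h2.tsum_eq]
  ring

lemma trigamma_half : trigamma (1/2) = π ^ 2 / 2 := by
  have hshift : HasSum (fun m : ℕ => 1 / (((2 * (m + 1) + 1 : ℕ)):ℝ) ^ 2) (π ^ 2 / 8 - 1) := by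
    apply (hasSum_nat_add_iff (f := fun k : ℕ => 1 / (((2 * k + 1 : ℕ)):ℝ) ^ 2) 1).mpr
    refine (congrArg (HasSum _) ?_).mp odd2
    norm_num [Finset.sum_range_succ]
  have h4 := hshift.mul_left 4
  have e : (fun m : ℕ => g2 m (1/2))
      = fun m : ℕ => 4 * (1 / (((2 * (m + 1) + 1 : ℕ)):ℝ) ^ 2) := by
    funext m
    rw [g2]
    push_cast
    have h3 : ((2:ℝ) * ((m:ℝ) + 1) + 1) ≠ 0 := by positivity
    rw [eq_comm]
    field_simp
    ring
  rw [trigamma_eq half_mem, G2, e, h4.tsum_eq]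
  norm_num
  ring

lemma tetragamma_half {z : ℝ} (hz : z = ∑' n : ℕ, 1 / ((n : ℝ) + 1) ^ 3) :
    tetragamma (1/2) = -14 * z := by
  have hshift : HasSum (fun m : ℕ => 1 / (((2 * (m + 1) + 1 : ℕ)):ℝ) ^ 3) (7 * z / 8 - 1) := by
    apply (hasSum_nat_add_iff (f := fun k : ℕ => 1 / (((2 * k + 1 : ℕ)):ℝ) ^ 3) 1).mpr
    refine (congrArg (HasSum _) ?_).mp (odd3 hz)
    norm_num [Finset.sum_range_succ]
  have h16 := hshift.mul_left (-16)
  have e : (fun m : ℕ => g3 m (1/2))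
      = fun m : ℕ => -16 * (1 / (((2 * (m + 1) + 1 : ℕ)):ℝ) ^ 3) := by
    funext m
    rw [g3]
    push_cast
    have h3 : ((2:ℝ) * ((m:ℝ) + 1) + 1) ≠ 0 := by positivity
    rw [eq_comm]
    field_simp
    ring
  rw [tetragamma_eq half_mem, G3, e, h16.tsum_eq]
  norm_num
  ring

end EulerAux

/-- In the Euler case `θ¹ = 1`, `θ² = 0` (so `u = v = 1/2`) of the beta-logistic family,
the α-scalar curvature
`R^{(α)} = (1−α²)(ψ'(1)ψ''(1/2)ψ''(1/2) − ψ''(1)(ψ'(1/2)ψ''(1/2) + ψ'(1/2)ψ''(1/2)))/(2𝒢²)`,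
with `𝒢 = ψ'(1/2)ψ'(1/2) − ψ'(1)(ψ'(1/2)+ψ'(1/2))`, equals `336(1−α²)ζ(3)²/π⁶`. -/
theorem euler_case_scalar_curvature (α z : ℝ)
    (hz : z = ∑' n : ℕ, 1 / ((n : ℝ) + 1) ^ 3)
    (𝒢 : ℝ)
    (hgg : 𝒢 = trigamma (1 / 2) * trigamma (1 / 2) -
      trigamma 1 * (trigamma (1 / 2) + trigamma (1 / 2))) :
    (1 - α ^ 2) *
        (trigamma 1 * tetragamma (1 / 2) * tetragamma (1 / 2) -
          tetragamma 1 *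
            (trigamma (1 / 2) * tetragamma (1 / 2) + trigamma (1 / 2) * tetragamma (1 / 2))) /
        (2 * 𝒢 ^ 2) =
      336 * (1 - α ^ 2) * z ^ 2 / Real.pi ^ 6 := by
  rw [hgg, EulerAux.trigamma_one, EulerAux.trigamma_half, EulerAux.tetragamma_one hz,
    EulerAux.tetragamma_half hz]
  have hπ : Real.pi ≠ 0 := Real.pi_ne_zero
  have h1 : (2:ℝ) * (Real.pi^2/2 * (Real.pi^2/2) -
      Real.pi^2/6 * (Real.pi^2/2 + Real.pi^2/2))^2 = Real.pi^8/72 := by ring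
  rw [h1, div_eq_div_iff (by positivity) (by positivity)]
  ring
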